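/- Let φ : [0,1] → ℝ be three times continuously differentiable with φ'(0) = 0, φ''(0) = d² > 0, and |φ'''(t)| ≤ S·d·φ''(t) for all t ∈ [0,1], where S > 0. Then φ(1) ≥ φ(0) + (1/S²)(e^{-Sd} + Sd - 1). -/

import Mathlib

private lemma mono_aux (f g : ℝ → ℝ)
    (hf : ∀ t ∈ Set.Icc (0 : ℝ) 1, HasDerivAt f (g t) t)
    (hg : ∀ t ∈ Set.Icc (0 : ℝ) 1, 0 ≤ g t) :
    MonotoneOn f (Set.Icc (0 : ℝ) 1) := by
  apply monotoneOn_of_deriv_nonneg (convex_Icc 0 1)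
  · exact fun t ht => (hf t ht).continuousAt.continuousWithinAt
  · intro t ht
    rw [interior_Icc] at ht
    exact (hf t (Set.mem_Icc_of_Ioo ht)).differentiableAt.differentiableWithinAt
  · intro t ht
    rw [interior_Icc] at ht
    rw [(hf t (Set.mem_Icc_of_Ioo ht)).deriv]
    exact hg t (Set.mem_Icc_of_Ioo ht)

/-- One-dimensional self-concordance lower bound: if `φ` is three times continuously
differentiable on `[0,1]` with `φ'(0) = 0`, `φ''(0) = d² > 0` and
`|φ'''(t)| ≤ S·d·φ''(t)`, then `φ(1) ≥ φ(0) + (1/S²)(e^{-Sd} + Sd - 1)`. -/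
theorem self_concordant_taylor_lower_bound
    (φ φ' φ'' φ''' : ℝ → ℝ) (d S : ℝ) (hd : 0 < d) (hS : 0 < S)
    (hder1 : ∀ t ∈ Set.Icc (0 : ℝ) 1, HasDerivAt φ (φ' t) t)
    (hder2 : ∀ t ∈ Set.Icc (0 : ℝ) 1, HasDerivAt φ' (φ'' t) t)
    (hder3 : ∀ t ∈ Set.Icc (0 : ℝ) 1, HasDerivAt φ'' (φ''' t) t)
    (hcont : ContinuousOn φ''' (Set.Icc (0 : ℝ) 1))
    (h0 : φ' 0 = 0) (h1 : φ'' 0 = d ^ 2)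
    (hbound : ∀ t ∈ Set.Icc (0 : ℝ) 1, |φ''' t| ≤ S * d * φ'' t) :
    φ 1 ≥ φ 0 + (1 / S ^ 2) * (Real.exp (-(S * d)) + S * d - 1) := by
  have hSd : 0 < S * d := mul_pos hS hd
  -- Step 1: ψ(t) = φ''(t) * exp(S d t) is monotone
  set ψ : ℝ → ℝ := fun t => φ'' t * Real.exp (S * d * t) with hψdef
  have hψder : ∀ t ∈ Set.Icc (0 : ℝ) 1,
      HasDerivAt ψ ((φ''' t + S * d * φ'' t) * Real.exp (S * d * t)) t := by
    intro t ht
    have he : HasDerivAt (fun t => Real.exp (S * d * t)) (S * d * Real.exp (S * d * t)) t := by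
      have := (Real.hasDerivAt_exp (S * d * t)).comp t
        ((hasDerivAt_id t).const_mul (S * d))
      simpa [Function.comp_def, mul_comm] using this
    have := (hder3 t ht).fun_mul he
    refine this.congr_deriv ?_
    ring
  have hψmono : MonotoneOn ψ (Set.Icc 0 1) := by
    apply mono_aux ψ (fun t => (φ''' t + S * d * φ'' t) * Real.exp (S * d * t)) hψder
    intro t ht
    apply mul_nonneg _ (Real.exp_nonneg _)
    have := hbound t ht
    have := neg_abs_le (φ''' t)
    linarith [abs_nonneg (φ''' t), hbound t ht, neg_abs_le (φ''' t)]
  -- φ'' lower bound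
  have hφ''lb : ∀ t ∈ Set.Icc (0 : ℝ) 1, d ^ 2 * Real.exp (-(S * d * t)) ≤ φ'' t := by
    intro t ht
    have h0m : (0 : ℝ) ∈ Set.Icc (0 : ℝ) 1 := by constructor <;> norm_num
    have := hψmono h0m ht ht.1
    have hψ0 : ψ 0 = d ^ 2 := by simp [hψdef, h1]
    have hψt : d ^ 2 ≤ φ'' t * Real.exp (S * d * t) := by
      rw [← hψ0]; exact this
    have hepos : 0 < Real.exp (S * d * t) := Real.exp_pos _
    rw [Real.exp_neg]
    calc d ^ 2 * (Real.exp (S * d * t))⁻¹ ≤ φ'' t * Real.exp (S * d * t) * (Real.exp (S * d * t))⁻¹ := by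
          apply mul_le_mul_of_nonneg_right hψt (by positivity)
      _ = φ'' t := by field_simp
  -- Step 2: φ' lower bound
  set θ : ℝ → ℝ := fun t => φ' t - (d / S) * (1 - Real.exp (-(S * d * t))) with hθdef
  have hθder : ∀ t ∈ Set.Icc (0 : ℝ) 1,
      HasDerivAt θ (φ'' t - d ^ 2 * Real.exp (-(S * d * t))) t := by
    intro t ht
    have he : HasDerivAt (fun t => Real.exp (-(S * d * t))) (-(S * d) * Real.exp (-(S * d * t))) t := by
      have := (Real.hasDerivAt_exp (-(S * d * t))).comp t
        ((hasDerivAt_id t).const_mul (S * d)).fun_neg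
      simpa [Function.comp_def, mul_comm] using this
    have := (hder2 t ht).fun_sub (((hasDerivAt_const t (1:ℝ)).fun_sub he).const_mul (d / S))
    refine this.congr_deriv ?_
    field_simp
    ring
  have hθmono : MonotoneOn θ (Set.Icc 0 1) := by
    apply mono_aux θ _ hθder
    intro t ht
    have := hφ''lb t ht
    linarith
  have hφ'lb : ∀ t ∈ Set.Icc (0 : ℝ) 1,
      (d / S) * (1 - Real.exp (-(S * d * t))) ≤ φ' t := by
    intro t ht
    have h0m : (0 : ℝ) ∈ Set.Icc (0 : ℝ) 1 := by constructor <;> norm_num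
    have := hθmono h0m ht ht.1
    have hθ0 : θ 0 = 0 := by simp [hθdef, h0]
    rw [hθ0] at this
    simp only [hθdef] at this
    linarith
  -- Step 3: φ lower bound
  set χ : ℝ → ℝ := fun t => φ t - ((d / S) * t + (1 / S ^ 2) * Real.exp (-(S * d * t)))
    with hχdef
  have hχder : ∀ t ∈ Set.Icc (0 : ℝ) 1,
      HasDerivAt χ (φ' t - (d / S) * (1 - Real.exp (-(S * d * t)))) t := by
    intro t ht
    have he : HasDerivAt (fun t => Real.exp (-(S * d * t))) (-(S * d) * Real.exp (-(S * d * t))) t := by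
      have := (Real.hasDerivAt_exp (-(S * d * t))).comp t
        ((hasDerivAt_id t).const_mul (S * d)).fun_neg
      simpa [Function.comp_def, mul_comm] using this
    have := (hder1 t ht).fun_sub
      ((((hasDerivAt_id t).const_mul (d / S)).fun_add (he.const_mul (1 / S ^ 2))))
    refine this.congr_deriv ?_
    field_simp
    ring
  have hχmono : MonotoneOn χ (Set.Icc 0 1) := by
    apply mono_aux χ _ hχder
    intro t ht
    have := hφ'lb t ht
    linarith
  have h0m : (0 : ℝ) ∈ Set.Icc (0 : ℝ) 1 := by constructor <;> norm_num
  have h1m : (1 : ℝ) ∈ Set.Icc (0 : ℝ) 1 := by constructor <;> norm_num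
  have := hχmono h0m h1m (by norm_num)
  simp only [hχdef, mul_one, mul_zero, neg_zero, Real.exp_zero] at this
  have hS2 : (0:ℝ) < S ^ 2 := by positivity
  rw [ge_iff_le]
  have heq : 1 / S ^ 2 * (Real.exp (-(S * d)) + S * d - 1)
      = (d / S * 1 + 1 / S ^ 2 * Real.exp (-(S * d))) - (0 + 1 / S ^ 2 * Real.exp (-(S * d * 0))) := by
    rw [mul_zero, neg_zero, Real.exp_zero]
    field_simp
    ring
  have he0 : Real.exp (-(S * d * 0)) = 1 := by norm_num
  simp only [he0, mul_one, add_zero, zero_add] at heq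
  linarith
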